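/- The Hilbert flying saucer X has exactly one end with basepoint 0: for every r > 0, the set { x ∈ X : d(x,0) > r } is path-connected. (For any two points u, v ∈ X with ‖u‖, ‖v‖ > r, one may connect them within X staying at norm > r, using that each sphere { x ∈ X : ‖x‖ = s } for s ≤ 1 intersected with X is path-connected through high-index coordinates.) -/

import Mathlib

set_option maxHeartbeats 1000000


/-- `ℓ²`, the Hilbert space of square-summable real sequences. -/
noncomputable abbrev ell2 : Type := lp (fun _ : ℕ => ℝ) 2

/-- The disk `Y_i` (here indexed from `0`, so `saucerY i` is the paper's `Y_{i+1}`):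
elements of norm at most `i+1` whose first `i` coordinates vanish. -/
def saucerY (i : ℕ) : Set ell2 :=
  {x : ell2 | ‖x‖ ≤ (i : ℝ) + 1 ∧ ∀ j < i, x j = 0}

/-- The Hilbert flying saucer `X = ⋃ᵢ Yᵢ ⊆ ℓ²`. -/
def saucer : Set ell2 := ⋃ i : ℕ, saucerY i

/-- The induced length (inner) metric on a subset `X` of a normed space: the infimum of
lengths (total variations) of continuous paths in `X` joining `u` to `v`. -/
noncomputable def lengthDist {E : Type*} [NormedAddCommGroup E] [NormedSpace ℝ E]
    (X : Set E) (u v : E) : ENNReal :=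
  ⨅ (γ : ℝ → E) (_ : ContinuousOn γ (Set.Icc 0 1)) (_ : γ 0 = u) (_ : γ 1 = v)
    (_ : Set.MapsTo γ (Set.Icc 0 1) X), eVariationOn γ (Set.Icc 0 1)

/-- An end of the metric subspace `(X, lengthDist X)` of a normed space, with basepoint
`o ∈ X`: a nested sequence `U n` of connected components of the complement in `X` of
the closed ball of radius `n` about `o`. -/
def IsEndL {E : Type*} [NormedAddCommGroup E] [NormedSpace ℝ E]
    (X : Set E) (o : E) (U : ℕ → Set E) : Prop :=
  (∀ n : ℕ, ∃ x ∈ X, (n : ENNReal) < lengthDist X o x ∧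
    U n = connectedComponentIn {y ∈ X | (n : ENNReal) < lengthDist X o y} x) ∧
  ∀ n : ℕ, U (n + 1) ⊆ U n


noncomputable def eV (M : ℕ) : ell2 := lp.single 2 M 1

open Set RealInnerProductSpace

lemma eV_apply_self (M : ℕ) : eV M M = 1 := lp.single_apply_self 2 M 1
lemma eV_apply_ne (M : ℕ) {j : ℕ} (h : j ≠ M) : eV M j = 0 := lp.single_apply_ne 2 M 1 h

lemma inner_eV (x : ell2) (M : ℕ) : ⟪x, eV M⟫ = x M := by
  rw [eV, lp.inner_single_right]
  simp [RCLike.inner_apply]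

lemma norm_eV (M : ℕ) : ‖eV M‖ = 1 := by
  have h : ⟪eV M, eV M⟫ = 1 := by rw [inner_eV, eV_apply_self]
  have := real_inner_self_eq_norm_mul_norm (eV M)
  nlinarith [norm_nonneg (eV M)]

lemma smul_mem_saucerY {i : ℕ} {x : ell2} (hx : x ∈ saucerY i) {c : ℝ} (hc : |c| ≤ 1) :
    c • x ∈ saucerY i := by
  obtain ⟨h1, h2⟩ := hx
  constructor
  · rw [norm_smul]
    calc |c| * ‖x‖ ≤ 1 * ‖x‖ := by
          exact mul_le_mul_of_nonneg_right hc (norm_nonneg x)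
    _ = ‖x‖ := one_mul _
    _ ≤ (i : ℝ) + 1 := h1
  · intro j hj
    rw [lp.coeFn_smul]
    simp [h2 j hj]

lemma mem_saucer_of {i : ℕ} {x : ell2} (hx : x ∈ saucerY i) : x ∈ saucer :=
  Set.mem_iUnion.2 ⟨i, hx⟩

lemma smul_mem_saucer {x : ell2} (hx : x ∈ saucer) {c : ℝ} (hc : |c| ≤ 1) :
    c • x ∈ saucer := by
  obtain ⟨_, ⟨i, rfl⟩, hi⟩ := hx
  exact mem_saucer_of (smul_mem_saucerY hi hc)

lemma lengthDist_eq_of_mem {x : ell2} (hx : x ∈ saucer) :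
    lengthDist saucer 0 x = ENNReal.ofReal ‖x‖ := by
  apply le_antisymm
  · -- upper bound: straight path
    have lip : LipschitzWith ‖x‖₊ (fun t : ℝ => t • x) := by
      apply LipschitzWith.of_dist_le_mul
      intro s t
      rw [dist_eq_norm, ← sub_smul, norm_smul, dist_eq_norm, Real.norm_eq_abs,
        coe_nnnorm, mul_comm]
    have hvar : eVariationOn (fun t : ℝ => t • x) (Icc (0:ℝ) 1) ≤ ENNReal.ofReal ‖x‖ := by
      have h1 : eVariationOn ((fun t : ℝ => t • x) ∘ id) (Icc (0:ℝ) 1) ≤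
          ‖x‖₊ * eVariationOn id (Icc (0:ℝ) 1) :=
        lip.lipschitzOnWith.comp_eVariationOn_le (Set.mapsTo_id _)
      have h2 : eVariationOn (id : ℝ → ℝ) (Icc (0:ℝ) 1) ≤ ENNReal.ofReal 1 := by
        have := MonotoneOn.eVariationOn_le (f := (id : ℝ → ℝ)) (s := Icc (0:ℝ) 1)
          (monotoneOn_id) (a := 0) (b := 1)
          (Set.left_mem_Icc.2 zero_le_one) (Set.right_mem_Icc.2 zero_le_one)
        simpa [Set.inter_self] using this
      calc eVariationOn (fun t : ℝ => t • x) (Icc (0:ℝ) 1)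
          = eVariationOn ((fun t : ℝ => t • x) ∘ id) (Icc (0:ℝ) 1) := rfl
        _ ≤ ‖x‖₊ * eVariationOn id (Icc (0:ℝ) 1) := h1
        _ ≤ ‖x‖₊ * ENNReal.ofReal 1 := by exact mul_le_mul_right h2 _
        _ = ENNReal.ofReal ‖x‖ := by
            rw [ENNReal.ofReal_one, mul_one, ofReal_norm, enorm_eq_nnnorm]
    refine iInf_le_of_le (fun t : ℝ => t • x) ?_
    refine iInf_le_of_le ((continuous_id.smul continuous_const).continuousOn) ?_
    refine iInf_le_of_le (zero_smul ℝ x) ?_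
    refine iInf_le_of_le (one_smul ℝ x) ?_
    refine iInf_le_of_le ?_ hvar
    intro t ht
    exact smul_mem_saucer hx (abs_le.2 ⟨by linarith [ht.1], ht.2⟩)
  · -- lower bound
    refine le_iInf fun γ => le_iInf fun hc => le_iInf fun h0 => le_iInf fun h1 =>
      le_iInf fun hm => ?_
    have h01 : (0:ℝ) ∈ Icc (0:ℝ) 1 := Set.left_mem_Icc.2 zero_le_one
    have h11 : (1:ℝ) ∈ Icc (0:ℝ) 1 := Set.right_mem_Icc.2 zero_le_one
    calc ENNReal.ofReal ‖x‖ = edist (γ 0) (γ 1) := by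
          rw [h0, h1, edist_dist, dist_zero_left]
      _ ≤ eVariationOn γ (Icc (0:ℝ) 1) := eVariationOn.edist_le γ h01 h11

lemma mem_T {r : ℝ} (hr : 0 ≤ r) {x : ell2} :
    (x ∈ saucer ∧ ENNReal.ofReal r < lengthDist saucer 0 x) ↔ (x ∈ saucer ∧ r < ‖x‖) := by
  constructor
  · rintro ⟨hs, hlt⟩
    rw [lengthDist_eq_of_mem hs] at hlt
    exact ⟨hs, by
      by_contra h
      exact absurd hlt (not_lt.2 (ENNReal.ofReal_le_ofReal (not_lt.1 h)))⟩
  · rintro ⟨hs, hlt⟩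
    rw [lengthDist_eq_of_mem hs]
    exact ⟨hs, (ENNReal.ofReal_lt_ofReal_iff_of_nonneg hr).2 hlt⟩

/-- The target set: points of the saucer at norm `> r`. -/
def Tset (r : ℝ) : Set ell2 := {x : ell2 | x ∈ saucer ∧ r < ‖x‖}

lemma joinedIn_of {S : Set ell2} {f : ℝ → ell2} (hf : Continuous f)
    (h : ∀ t ∈ Icc (0:ℝ) 1, f t ∈ S) : JoinedIn S (f 0) (f 1) := by
  refine ⟨⟨⟨fun t => f t, hf.comp continuous_subtype_val⟩, rfl, rfl⟩, fun t => h t t.2⟩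

lemma joinedIn_radial {r : ℝ} {i : ℕ} {u : ell2} (hu : ∀ j < i, u j = 0)
    {c d : ℝ} (hc0 : 0 ≤ c) (hcd : c ≤ d) (hc : r < c * ‖u‖) (hd : d * ‖u‖ ≤ (i:ℝ) + 1) :
    JoinedIn (Tset r) (c • u) (d • u) := by
  have hf : Continuous fun t : ℝ => ((1-t)*c + t*d) • u := by
    exact (((continuous_const.sub continuous_id).mul continuous_const).add
      (continuous_id.mul continuous_const)).smul continuous_const
  have key := joinedIn_of (S := Tset r) hf ?_
  · have h0 : ((1-(0:ℝ))*c + 0*d) • u = c • u := by norm_num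
    have h1 : ((1-(1:ℝ))*c + 1*d) • u = d • u := by norm_num
    rwa [h0, h1] at key
  · intro t ht
    set s := (1-t)*c + t*d with hs
    have hsc : c ≤ s := by nlinarith [ht.1, ht.2]
    have hsd : s ≤ d := by nlinarith [ht.1, ht.2]
    have hs0 : 0 ≤ s := le_trans hc0 hsc
    have hnorm : ‖s • u‖ = s * ‖u‖ := by
      rw [norm_smul, Real.norm_eq_abs, abs_of_nonneg hs0]
    constructor
    · refine mem_saucer_of (i := i) ⟨?_, ?_⟩
      · rw [hnorm]
        calc s * ‖u‖ ≤ d * ‖u‖ := mul_le_mul_of_nonneg_right hsd (norm_nonneg u)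
          _ ≤ (i:ℝ) + 1 := hd
      · intro j hj
        rw [lp.coeFn_smul, Pi.smul_apply, hu j hj, smul_zero]
    · rw [hnorm]
      calc r < c * ‖u‖ := hc
        _ ≤ s * ‖u‖ := mul_le_mul_of_nonneg_right hsc (norm_nonneg u)

open Real in
lemma joinedIn_rot {r : ℝ} (hr : 0 ≤ r) {i M : ℕ} (hiM : i ≤ M) {u : ell2}
    (hu : ∀ j < i, u j = 0) {b : ℝ} (hb : 0 ≤ b)
    (hlow : r^2 + b * |u M| < min ‖u‖ b ^ 2)
    (hhigh : max ‖u‖ b ^ 2 + b * |u M| ≤ ((i:ℝ)+1)^2) :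
    JoinedIn (Tset r) u (b • eV M) := by
  set a := ‖u‖ with ha
  have hf : Continuous fun t : ℝ =>
      Real.cos (t*(π/2)) • u + (b * Real.sin (t*(π/2))) • eV M := by
    have hθ : Continuous fun t : ℝ => t*(π/2) := continuous_id.mul continuous_const
    exact ((Real.continuous_cos.comp hθ).smul continuous_const).add
      ((continuous_const.mul (Real.continuous_sin.comp hθ)).smul continuous_const)
  have key := joinedIn_of (S := Tset r) hf ?_
  · have h0 : Real.cos ((0:ℝ)*(π/2)) • u + (b * Real.sin ((0:ℝ)*(π/2))) • eV M = u := by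
      simp
    have h1 : Real.cos ((1:ℝ)*(π/2)) • u + (b * Real.sin ((1:ℝ)*(π/2))) • eV M = b • eV M := by
      simp
    rwa [h0, h1] at key
  · intro t _
    set c := Real.cos (t*(π/2)) with hcdef
    set s := Real.sin (t*(π/2)) with hsdef
    have hcs : c^2 + s^2 = 1 := by rw [hcdef, hsdef]; exact cos_sq_add_sin_sq _
    have hexp : ‖c • u + (b*s) • eV M‖^2 = c^2*a^2 + b^2*s^2 + 2*c*(b*s)*(u M) := by
      rw [norm_add_sq_real, norm_smul, norm_smul, real_inner_smul_left,
        real_inner_smul_right, inner_eV, norm_eV, Real.norm_eq_abs, Real.norm_eq_abs]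
      ring_nf
      rw [sq_abs, sq_abs]
      ring
    have h2cs : |2*c*s| ≤ 1 := by
      rw [abs_le]
      constructor <;> nlinarith [sq_nonneg (c+s), sq_nonneg (c-s)]
    have hcross : |2*c*(b*s)*(u M)| ≤ b * |u M| := by
      have he : 2*c*(b*s)*(u M) = b * ((2*c*s) * u M) := by ring
      rw [he, abs_mul, abs_of_nonneg hb, abs_mul]
      exact mul_le_mul_of_nonneg_left
        (mul_le_of_le_one_left (abs_nonneg _) h2cs) hb
    have hmin : min a b ^ 2 ≤ c^2*a^2 + b^2*s^2 := by
      have h1 : min a b ≤ a := min_le_left _ _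
      have h2 : min a b ≤ b := min_le_right _ _
      have h3 : 0 ≤ min a b := le_min (ha ▸ norm_nonneg u) hb
      have ha2 : min a b ^ 2 ≤ a^2 := pow_le_pow_left₀ h3 h1 2
      have hb2 : min a b ^ 2 ≤ b^2 := pow_le_pow_left₀ h3 h2 2
      nlinarith [mul_le_mul_of_nonneg_left ha2 (sq_nonneg c),
        mul_le_mul_of_nonneg_left hb2 (sq_nonneg s)]
    have hmax : c^2*a^2 + b^2*s^2 ≤ max a b ^ 2 := by
      have h1 : a ≤ max a b := le_max_left _ _
      have h2 : b ≤ max a b := le_max_right _ _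
      have h0a : (0:ℝ) ≤ a := ha ▸ norm_nonneg u
      have hM0 : (0:ℝ) ≤ max a b := le_trans h0a h1
      have ha2 : a^2 ≤ max a b ^ 2 := pow_le_pow_left₀ h0a h1 2
      have hb2 : b^2 ≤ max a b ^ 2 := pow_le_pow_left₀ hb h2 2
      nlinarith [mul_le_mul_of_nonneg_left ha2 (sq_nonneg c),
        mul_le_mul_of_nonneg_left hb2 (sq_nonneg s)]
    have hlo : r^2 < ‖c • u + (b*s) • eV M‖^2 := by
      rw [hexp]
      linarith [neg_abs_le (2*c*(b*s)*(u M)), hcross, hmin, hlow]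
    have hhi : ‖c • u + (b*s) • eV M‖^2 ≤ ((i:ℝ)+1)^2 := by
      rw [hexp]
      linarith [le_abs_self (2*c*(b*s)*(u M)), hcross, hmax, hhigh]
    constructor
    · refine mem_saucer_of (i := i) ⟨?_, ?_⟩
      · have hi1 : (0:ℝ) ≤ (i:ℝ)+1 := by positivity
        exact (abs_le_of_sq_le_sq' hhi hi1).2
      · intro j hj
        rw [lp.coeFn_add, Pi.add_apply, lp.coeFn_smul, lp.coeFn_smul, Pi.smul_apply,
          Pi.smul_apply, hu j hj, eV_apply_ne M (by omega), smul_zero, smul_zero, add_zero]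
    · exact lt_of_pow_lt_pow_left₀ 2 (norm_nonneg _) hlo

lemma exists_small_coord (u : ell2) {ε : ℝ} (hε : 0 < ε) (K : ℕ) :
    ∃ M, K ≤ M ∧ |u M| < ε := by
  have hmem : Memℓp (u : ∀ _ : ℕ, ℝ) 2 := lp.memℓp u
  have hsum := hmem.summable (by norm_num : 0 < (2:ENNReal).toReal)
  have h2 : Filter.Tendsto (fun i => ‖(u : ∀ _ : ℕ, ℝ) i‖ ^ (2:ENNReal).toReal)
      Filter.atTop (nhds 0) := hsum.tendsto_atTop_zero
  have hev : ∀ᶠ M in Filter.atTop, ‖(u : ∀ _ : ℕ, ℝ) M‖ ^ (2:ENNReal).toReal < ε^2 :=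
    h2.eventually (gt_mem_nhds (by positivity))
  obtain ⟨M, hM1, hM2⟩ := ((Filter.eventually_ge_atTop K).and hev).exists
  refine ⟨M, hM1, ?_⟩
  rw [show ((2:ENNReal).toReal) = ((2:ℕ):ℝ) by norm_num, Real.rpow_natCast,
    Real.norm_eq_abs] at hM2
  nlinarith [abs_nonneg (u M), hM2]

lemma isPathConnected_Tset {r : ℝ} (hr : 0 ≤ r) : IsPathConnected (Tset r) := by
  set N : ℕ := ⌈r⌉₊ + 1 with hN
  set R : ℝ := r + 1 with hR
  have hRpos : 0 < R := by rw [hR]; linarith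
  have hRN : R ≤ (N:ℝ) := by
    have := Nat.le_ceil r
    rw [hR, hN]; push_cast; linarith
  have hx0norm : ‖(R • eV N : ell2)‖ = R := by
    rw [norm_smul, norm_eV, Real.norm_eq_abs, abs_of_pos hRpos, mul_one]
  have hx0mem : (R • eV N : ell2) ∈ Tset r := by
    refine ⟨mem_saucer_of (i := N) ⟨by rw [hx0norm]; linarith, fun j hj => ?_⟩,
      by rw [hx0norm]; linarith⟩
    rw [lp.coeFn_smul, Pi.smul_apply, eV_apply_ne N (by omega), smul_zero]
  refine ⟨R • eV N, hx0mem, ?_⟩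
  intro y hy
  obtain ⟨hys, hyr⟩ := hy
  obtain ⟨_, ⟨i, rfl⟩, hyn, hyz⟩ := hys
  set a := ‖y‖ with hadef
  have ha : r < a := hyr
  have ha0 : 0 < a := lt_of_le_of_lt hr ha
  set b := (a + r)/2 with hbdef
  have hrb : r < b := by rw [hbdef]; linarith
  have hba : b < a := by rw [hbdef]; linarith
  have hb0 : 0 < b := lt_of_le_of_lt hr hrb
  have hca : b/a ≤ 1 := (div_le_one ha0).2 hba.le
  have hca0 : 0 ≤ b/a := by positivity
  have J1 : JoinedIn (Tset r) ((b/a) • y) y := by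
    have hc' : r < (b/a) * ‖y‖ := by
      rw [← hadef, div_mul_cancel₀ _ (ne_of_gt ha0)]; exact hrb
    have hd' : (1:ℝ) * ‖y‖ ≤ (i:ℝ) + 1 := by rw [one_mul]; exact hyn
    have := joinedIn_radial (r := r) hyz hca0 hca hc' hd'
    rwa [one_smul] at this
  set u' : ell2 := (b/a) • y with hu'
  have hu'z : ∀ j < i, u' j = 0 := fun j hj => by
    rw [hu', lp.coeFn_smul, Pi.smul_apply, hyz j hj, smul_zero]
  have hu'norm : ‖u'‖ = b := by
    rw [hu', norm_smul, Real.norm_eq_abs, abs_of_nonneg hca0, ← hadef,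
      div_mul_cancel₀ _ (ne_of_gt ha0)]
  have hbi : b < (i:ℝ)+1 := lt_of_lt_of_le hba hyn
  set δ := min (b^2 - r^2) (((i:ℝ)+1)^2 - b^2) with hδdef
  have hδ : 0 < δ := lt_min (by nlinarith) (by nlinarith)
  obtain ⟨M, hMge, hMsmall⟩ := exists_small_coord u' (show 0 < δ/b by positivity)
    (max (max i (N+1)) ⌈b⌉₊)
  have hMi : i ≤ M := le_trans (le_max_of_le_left (le_max_left _ _)) hMge
  have hMN : N+1 ≤ M := le_trans (le_max_of_le_left (le_max_right _ _)) hMge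
  have hMb : b ≤ (M:ℝ) := by
    have h1 : (⌈b⌉₊:ℝ) ≤ M := Nat.cast_le.2 (le_trans (le_max_right _ _) hMge)
    exact le_trans (Nat.le_ceil b) h1
  have hRM : R ≤ (M:ℝ) := by
    have : (N:ℝ) ≤ M := by exact_mod_cast Nat.le_of_succ_le hMN
    linarith
  have hbM : b * |u' M| < δ := by
    calc b * |u' M| < b * (δ/b) := mul_lt_mul_of_pos_left hMsmall hb0
      _ = δ := mul_div_cancel₀ _ (ne_of_gt hb0)
  have J2 : JoinedIn (Tset r) u' (b • eV M) := by
    refine joinedIn_rot hr hMi hu'z hb0.le ?_ ?_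
    · rw [hu'norm, min_self]
      have := min_le_left (b^2 - r^2) (((i:ℝ)+1)^2 - b^2)
      linarith
    · rw [hu'norm, max_self]
      have := min_le_right (b^2 - r^2) (((i:ℝ)+1)^2 - b^2)
      linarith
  have hzM : ∀ j < M, eV M j = 0 := fun j hj => eV_apply_ne M (by omega)
  have J3 : JoinedIn (Tset r) (b • eV M) (R • eV M) := by
    rcases le_total b R with h | h
    · refine joinedIn_radial (r := r) (i := M) hzM hb0.le h ?_ ?_
      · rw [norm_eV, mul_one]; exact hrb
      · rw [norm_eV, mul_one]; linarith
    · refine (joinedIn_radial (r := r) (i := M) hzM hRpos.le h ?_ ?_).symm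
      · rw [norm_eV, mul_one]; linarith
      · rw [norm_eV, mul_one]; linarith
  have J4 : JoinedIn (Tset r) (R • eV M) (R • eV N) := by
    have hz : ∀ j < N, (R • eV M : ell2) j = 0 := fun j hj => by
      rw [lp.coeFn_smul, Pi.smul_apply, eV_apply_ne M (by omega), smul_zero]
    have hnorm : ‖(R • eV M : ell2)‖ = R := by
      rw [norm_smul, norm_eV, Real.norm_eq_abs, abs_of_pos hRpos, mul_one]
    have hcoord : (R • eV M : ell2) N = 0 := by
      rw [lp.coeFn_smul, Pi.smul_apply, eV_apply_ne M (by omega), smul_zero]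
    refine joinedIn_rot hr (le_refl N) hz hRpos.le ?_ ?_
    · rw [hnorm, min_self, hcoord, abs_zero, mul_zero, add_zero]
      nlinarith
    · rw [hnorm, max_self, hcoord, abs_zero, mul_zero, add_zero]
      nlinarith
  exact (J1.symm.trans (J2.trans (J3.trans J4))).symm

lemma Tset_eq (r : ℝ) (hr : 0 ≤ r) :
    {x : ell2 | x ∈ saucer ∧ ENNReal.ofReal r < lengthDist saucer 0 x} = Tset r :=
  Set.ext fun _ => mem_T hr

lemma sep_eq (n : ℕ) :
    {y ∈ saucer | (n : ENNReal) < lengthDist saucer 0 y} = Tset (n:ℝ) := by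
  ext x
  rw [Set.mem_sep_iff,
    show ((n:ENNReal)) = ENNReal.ofReal (n:ℝ) by simp [ENNReal.ofReal_natCast]]
  exact mem_T (Nat.cast_nonneg n)

lemma conn_eq (n : ℕ) {x : ell2} (hx : x ∈ Tset (n:ℝ)) :
    connectedComponentIn (Tset (n:ℝ)) x = Tset (n:ℝ) := by
  refine subset_antisymm (connectedComponentIn_subset _ _) ?_
  exact ((isPathConnected_Tset (Nat.cast_nonneg n)).isConnected.isPreconnected
    ).subset_connectedComponentIn hx (subset_refl _)

noncomputable def wpt (n : ℕ) : ell2 := ((n:ℝ)+2) • eV (n+2)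

lemma wpt_norm (n : ℕ) : ‖wpt n‖ = (n:ℝ)+2 := by
  rw [wpt, norm_smul, norm_eV, Real.norm_eq_abs, abs_of_pos (by positivity), mul_one]

lemma wpt_saucer (n : ℕ) : wpt n ∈ saucer := by
  refine mem_saucer_of (i := n+2) ⟨?_, fun j hj => ?_⟩
  · rw [wpt_norm]; push_cast; linarith
  · rw [wpt, lp.coeFn_smul, Pi.smul_apply, eV_apply_ne _ (by omega), smul_zero]

lemma wpt_T (n : ℕ) : wpt n ∈ Tset (n:ℝ) :=
  ⟨wpt_saucer n, by rw [wpt_norm]; linarith⟩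

lemma wpt_lt (n : ℕ) : (n : ENNReal) < lengthDist saucer 0 (wpt n) := by
  rw [lengthDist_eq_of_mem (wpt_saucer n), wpt_norm, ← ENNReal.ofReal_natCast]
  exact (ENNReal.ofReal_lt_ofReal_iff (by positivity)).2 (by linarith)


/-- The Hilbert flying saucer has exactly one end (basepoint `0`): for every `r > 0`,
the set `{x ∈ X : d(x,0) > r}` is path-connected. -/
theorem stmt_19 :
    (∀ r : ℝ, 0 < r →
      IsPathConnected {x : ell2 | x ∈ saucer ∧ ENNReal.ofReal r < lengthDist saucer 0 x}) ∧
    ∃! U : ℕ → Set ell2, IsEndL saucer 0 U := by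
  constructor
  · intro r hrpos
    rw [Tset_eq r hrpos.le]
    exact isPathConnected_Tset hrpos.le
  · refine ⟨fun n => Tset (n:ℝ), ⟨fun n => ⟨wpt n, wpt_saucer n, wpt_lt n, ?_⟩,
      fun n x hx => ?_⟩, ?_⟩
    · rw [sep_eq n, conn_eq n (wpt_T n)]
    · obtain ⟨h1, h2⟩ := hx
      refine ⟨h1, lt_of_le_of_lt ?_ h2⟩
      push_cast; linarith
    · intro V hV
      funext n
      obtain ⟨hex, _⟩ := hV
      obtain ⟨x, hxs, hxlt, hVeq⟩ := hex n
      have hxT : x ∈ Tset (n:ℝ) := by rw [← sep_eq n]; exact ⟨hxs, hxlt⟩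
      rw [hVeq, sep_eq n, conn_eq n hxT]
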